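/- Let q, a, z ∈ ℂ and let n, k be nonnegative integers such that q^j ≠ 1 for 1 ≤ j ≤ k+1 and a q^n ≠ 1. Define G'(n, k) = − a q^n (1 − q^k) (a q^n;q)_k z^k / ((1 − a q^n)(q;q)_k). Then the WZ certificate identity for the q-binomial theorem holds: (1 − a z q^n)·(a q^{n+1};q)_k z^k / (q;q)_k − (a q^n;q)_k z^k / (q;q)_k = G'(n, k+1) − G'(n, k). -/
import Mathlib


/-- The finite q-shifted factorial `(a;q)_n = ∏_{j=0}^{n-1} (1 - a q^j)`. -/
noncomputable def qPoch (q a : ℂ) (n : ℕ) : ℂ := ∏ j ∈ Finset.range n, (1 - a * q ^ j)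

/-- The WZ certificate `G'(n, k) = - a q^n (1-q^k) (a q^n;q)_k z^k / ((1-a q^n)(q;q)_k)`
for the q-binomial theorem. -/
noncomputable def G' (q a z : ℂ) (n k : ℕ) : ℂ :=
  -(a * q ^ n * (1 - q ^ k) * qPoch q (a * q ^ n) k * z ^ k) /
    ((1 - a * q ^ n) * qPoch q q k)

lemma qPoch_succ (q a : ℂ) (k : ℕ) :
    qPoch q a (k + 1) = qPoch q a k * (1 - a * q ^ k) := by
  simp [qPoch, Finset.prod_range_succ]

lemma qPoch_shift (q a : ℂ) (n k : ℕ) :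
    qPoch q (a * q ^ n) (k + 1) = (1 - a * q ^ n) * qPoch q (a * q ^ (n + 1)) k := by
  rw [qPoch, qPoch, Finset.prod_range_succ']
  simp only [pow_zero, mul_one]
  rw [mul_comm]
  congr 1
  apply Finset.prod_congr rfl
  intro j _
  ring_nf

/-- The WZ certificate identity (3.10) for the q-binomial theorem. -/
theorem q_binomial_wz_certificate (q a z : ℂ) (n k : ℕ)
    (hq : ∀ j : ℕ, 1 ≤ j → j ≤ k + 1 → q ^ j ≠ 1) (ha : a * q ^ n ≠ 1) :
    (1 - a * z * q ^ n) * (qPoch q (a * q ^ (n + 1)) k * z ^ k / qPoch q q k)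
        - qPoch q (a * q ^ n) k * z ^ k / qPoch q q k =
      G' q a z n (k + 1) - G' q a z n k := by
  have hA : (1 : ℂ) - a * q ^ n ≠ 0 := sub_ne_zero.mpr (fun h => ha h.symm)
  have hQ : qPoch q q k ≠ 0 := by
    rw [qPoch]
    apply Finset.prod_ne_zero_iff.mpr
    intro j hj
    rw [Finset.mem_range] at hj
    have := hq (j + 1) (by omega) (by omega)
    intro h
    apply this
    rw [pow_succ']
    exact (sub_eq_zero.mp h).symm
  have hk1 : (1 : ℂ) - q ^ (k + 1) ≠ 0 := sub_ne_zero.mpr (fun h => hq (k + 1) (by omega) le_rfl h.symm)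
  have key : (1 - a * q ^ n) * qPoch q (a * q ^ (n + 1)) k
      = qPoch q (a * q ^ n) k * (1 - a * q ^ n * q ^ k) := by
    rw [← qPoch_shift, qPoch_succ]
  have hk1' : (1 : ℂ) - q * q ^ k ≠ 0 := by
    rw [← pow_succ']; exact hk1
  unfold G'
  rw [qPoch_succ q q k, qPoch_shift]
  rw [mul_div_assoc', div_sub_div _ _ hQ hQ, div_sub_div _ _ (mul_ne_zero hA (mul_ne_zero hQ hk1')) (mul_ne_zero hA hQ), div_eq_div_iff (mul_ne_zero hQ hQ) (mul_ne_zero (mul_ne_zero hA (mul_ne_zero hQ hk1')) (mul_ne_zero hA hQ))]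
  linear_combination (z ^ k * (1 - a * q ^ n) * qPoch q q k ^ 3 * (1 - q * q ^ k)) * key
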